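/- Let T be a nonempty tree and let G be a finitely generated group acting on T by automorphisms such that every element of G fixes some vertex of T. Then there is a vertex of T fixed by every element of G. -/

import Mathlib

open SimpleGraph Walk

set_option linter.unusedSectionVars false

namespace PurelyElliptic

variable {V : Type*} [DecidableEq V] {T : SimpleGraph V} (hT : T.IsTree)

/-- The unique path between two vertices of a tree. -/
noncomputable def tpath (x y : V) : T.Walk x y := (hT.existsUnique_path x y).exists.choose

lemma tpath_isPath (x y : V) : (tpath hT x y).IsPath :=
  (hT.existsUnique_path x y).exists.choose_spec

lemma tpath_unique {x y : V} {p : T.Walk x y} (hp : p.IsPath) : p = tpath hT x y := by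
  obtain ⟨q, hq, hu⟩ := hT.existsUnique_path x y
  rw [hu p hp, hu _ (tpath_isPath hT x y)]

/-- Tree distance. -/
noncomputable def td (x y : V) : ℕ := (tpath hT x y).length

lemma td_eq_zero_iff {x y : V} : td hT x y = 0 ↔ x = y := by
  constructor
  · exact fun h => Walk.eq_of_length_eq_zero h
  · rintro rfl
    have : (Walk.nil : T.Walk x x) = tpath hT x x := tpath_unique hT IsPath.nil
    simp [td, ← this]

lemma td_self (x : V) : td hT x x = 0 := (td_eq_zero_iff hT).2 rfl

lemma td_symm (x y : V) : td hT x y = td hT y x := by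
  have : (tpath hT x y).reverse = tpath hT y x :=
    tpath_unique hT ((tpath_isPath hT x y).reverse)
  simp [td, ← this]

lemma takeUntil_tpath {x y u : V} (h : u ∈ (tpath hT x y).support) :
    (tpath hT x y).takeUntil u h = tpath hT x u :=
  tpath_unique hT ((tpath_isPath hT x y).takeUntil h)

lemma dropUntil_tpath {x y u : V} (h : u ∈ (tpath hT x y).support) :
    (tpath hT x y).dropUntil u h = tpath hT u y :=
  tpath_unique hT ((tpath_isPath hT x y).dropUntil h)

lemma td_add {x y u : V} (h : u ∈ (tpath hT x y).support) :
    td hT x u + td hT u y = td hT x y := by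
  have := (tpath hT x y).take_spec h
  have hl := congrArg Walk.length this
  rw [Walk.length_append, takeUntil_tpath hT h, dropUntil_tpath hT h] at hl
  exact hl

lemma getVert_td {x y u : V} (h : u ∈ (tpath hT x y).support) :
    (tpath hT x y).getVert (td hT x u) = u := by
  conv_lhs => rw [← (tpath hT x y).take_spec h]
  rw [Walk.getVert_append]
  rw [takeUntil_tpath hT h]
  simp [td]

lemma eq_of_td_eq {x y u w : V} (hu : u ∈ (tpath hT x y).support)
    (hw : w ∈ (tpath hT x y).support) (h : td hT x u = td hT x w) : u = w := by
  rw [← getVert_td hT hu, ← getVert_td hT hw, h]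


section Action

variable {Γ : Type*} [Group Γ] [MulAction Γ V]
  (hact : ∀ (g : Γ) (u v : V), T.Adj u v ↔ T.Adj (g • u) (g • v))

/-- The graph homomorphism given by the action of `g`. -/
def actHom (g : Γ) : T →g T where
  toFun := (g • ·)
  map_rel' := fun h => (hact g _ _).1 h

lemma actHom_injective (g : Γ) : Function.Injective (actHom (T := T) hact g) :=
  MulAction.injective g

lemma tpath_map {x y : V} (g : Γ) :
    (tpath hT x y).map (actHom hact g) = tpath hT (g • x) (g • y) :=
  tpath_unique hT (Walk.map_isPath_of_injective (actHom_injective hact g) (tpath_isPath hT x y))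

include hact in
lemma td_smul (g : Γ) (x y : V) : td hT (g • x) (g • y) = td hT x y := by
  rw [td, ← tpath_map hT hact g]; exact Walk.length_map ..

include hact in
/-- Fixed-point sets are convex: every vertex on the path between two fixed
vertices is fixed. -/
lemma fix_convex {g : Γ} {x y : V} (hx : g • x = x) (hy : g • y = y)
    {z : V} (hz : z ∈ (tpath hT x y).support) : g • z = z := by
  have hcopy : (((tpath hT x y).map (actHom hact g)).copy hx hy).IsPath :=
    (Walk.isPath_copy _ _ _).2
      (Walk.map_isPath_of_injective (actHom_injective hact g) (tpath_isPath hT x y))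
  have heq : ((tpath hT x y).map (actHom hact g)).copy hx hy = tpath hT x y :=
    tpath_unique hT hcopy
  have hsup : (tpath hT x y).support.map (g • ·) = (tpath hT x y).support := by
    have := congrArg Walk.support heq
    exact (Walk.support_map ..).symm.trans ((Walk.support_copy ..).symm.trans this)
  clear heq hcopy
  revert hz
  generalize (tpath hT x y).support = l at hsup ⊢
  induction l with
  | nil => simp
  | cons a t ih =>
    simp only [List.map_cons, List.cons.injEq] at hsup
    intro hz
    rcases List.mem_cons.1 hz with rfl | hz
    · exact hsup.1
    · exact ih hsup.2 hz

include hact in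
/-- Midpoint lemma: if `α` is a fixed vertex of `g` at minimal distance from `x`,
then the path from `x` to `g • x` has length `2 * d(x, α)` and passes through `α`. -/
lemma midpoint {g : Γ} {x α : V} (hα : g • α = α)
    (hmin : ∀ s : V, g • s = s → td hT x α ≤ td hT x s) :
    td hT x (g • x) = 2 * td hT x α ∧ α ∈ (tpath hT x (g • x)).support := by
  set q : T.Walk α x := tpath hT α x with hq
  have hqp : q.IsPath := tpath_isPath hT α x
  set q' : T.Walk α (g • x) := ((q.map (actHom hact g)).copy hα rfl) with hq'
  have hq'p : q'.IsPath :=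
    (Walk.isPath_copy _ _ _).2
      (Walk.map_isPath_of_injective (actHom_injective hact g) hqp)
  have hq'eq : q' = tpath hT α (g • x) := tpath_unique hT hq'p
  have hsupq' : q'.support = q.support.map (g • ·) := by
    rw [hq']; exact (Walk.support_copy ..).trans (Walk.support_map ..)
  have hdinv : td hT α (g • x) = td hT α x := by
    conv_lhs => rw [← hα]
    exact td_smul hT hact g α x
  -- any common vertex of q and q' is α
  have hcommon : ∀ z, z ∈ q.support → z ∈ q'.support → z = α := by
    intro z hz hz'
    by_contra hne
    have hz'' : z ∈ (tpath hT α (g • x)).support := by rwa [← hq'eq]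
    have d1 : td hT α z + td hT z x = td hT α x := td_add hT hz
    have d2 : td hT α z + td hT z (g • x) = td hT α x := by
      rw [td_add hT hz'', hdinv]
    obtain ⟨u, hu, huz⟩ := List.mem_map.1 (hsupq' ▸ hz')
    have hux : td hT u x = td hT z (g • x) := by
      rw [← huz]
      exact (td_smul hT hact g u x).symm
    have d3 : td hT α u + td hT u x = td hT α x := td_add hT hu
    have : td hT α u = td hT α z := by omega
    have huz2 : u = z := eq_of_td_eq hT hu hz this
    have hfix : g • z = z := by rw [← huz2] at huz ⊢; exact huz
    have hαz : td hT α z ≠ 0 := fun h0 => hne ((td_eq_zero_iff hT).1 h0).symm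
    have : td hT x α ≤ td hT x z := hmin z hfix
    rw [td_symm hT x α, td_symm hT x z] at this
    omega
  -- the concatenation is a path
  set r : T.Walk x (g • x) := q.reverse.append q' with hr
  have hrp : r.IsPath := by
    rw [Walk.isPath_def, hr, Walk.support_append, Walk.support_reverse]
    refine List.Nodup.append (by simpa using hqp.support_nodup)
      (hq'p.support_nodup.sublist (List.tail_sublist _)) ?_
    intro z hz hz'
    have hz1 : z ∈ q.support := by simpa using hz
    have hz2 : z ∈ q'.support := List.mem_of_mem_tail hz'
    have : z = α := hcommon z hz1 hz2
    subst this
    have := hq'p.support_nodup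
    rw [q'.support_eq_cons] at this
    exact (List.nodup_cons.1 this).1 hz'
  have hreq : r = tpath hT x (g • x) := tpath_unique hT hrp
  constructor
  · have : r.length = q.length + q.length := by
      rw [hr, Walk.length_append, Walk.length_reverse, hq']
      exact congrArg (q.length + ·) ((Walk.length_copy ..).trans (Walk.length_map ..))
    have hqlen : q.length = td hT x α := by rw [td_symm hT x α]; rfl
    rw [td, ← hreq, this, hqlen]
    omega
  · rw [← hreq, hr, Walk.support_append]
    exact List.mem_append_left _ (by simp)

omit [DecidableEq V] in
lemma exists_gate {g : Γ} (x : V) (hg : ∃ s : V, g • s = s) :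
    ∃ α, g • α = α ∧ ∀ s, g • s = s → td hT x α ≤ td hT x s := by
  classical
  have hP : ∃ n, ∃ s, g • s = s ∧ td hT x s = n := ⟨_, hg.choose, hg.choose_spec, rfl⟩
  obtain ⟨s, hs, hsd⟩ := Nat.find_spec hP
  exact ⟨s, hs, fun t ht => by rw [hsd]; exact Nat.find_min' hP ⟨t, ht, rfl⟩⟩

omit [DecidableEq V] in
lemma adj_of_support_subset {a b : V} (p : T.Walk a b) (hp : p.IsPath)
    (hs : ∀ z ∈ p.support, z = a ∨ z = b) (hab : a ≠ b) : T.Adj a b := by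
  cases p with
  | nil => exact absurd rfl hab
  | cons adj q =>
    rename_i c
    have hcq : c ∈ q.support := q.start_mem_support
    have hc : c = a ∨ c = b := hs c (by simp [Walk.support_cons, hcq])
    have hca : c ≠ a := by
      rintro rfl
      exact ((Walk.cons_isPath_iff _ _).1 hp).2 hcq
    rcases hc with hc | hc
    · exact absurd hc hca
    · subst hc; exact adj

include hact in
/-- The key ping-pong lemma. -/
lemma key {h k : Γ} {a b : V} (hha : h • a = a) (hkb : k • b = b) (hab : a ≠ b)
    (hFh : ∀ z ∈ (tpath hT a b).support, h • z = z → z = a)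
    (hFk : ∀ z ∈ (tpath hT a b).support, k • z = z → z = b)
    (hell : ∀ g : Γ, ∃ v : V, g • v = v) : False := by
  obtain ⟨x, hx⟩ := hell (h * k)
  have hkx : k • x = h⁻¹ • x := by
    have hx' : h • k • x = x := by rw [← mul_smul]; exact hx
    conv_rhs => rw [← hx']
    rw [inv_smul_smul]
  obtain ⟨β, hβk, hβmin⟩ := exists_gate hT x ⟨b, hkb⟩
  obtain ⟨α, hαh, hαmin⟩ := exists_gate (g := h⁻¹) hT x
    ⟨a, by rw [inv_smul_eq_iff, hha]⟩
  have hB1 := midpoint hT hact hβk hβmin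
  have hB2 := midpoint hT hact hαh hαmin
  rw [← hkx] at hB2
  have hdαβ : td hT x α = td hT x β := by omega
  have hαβ : α = β := eq_of_td_eq hT hB2.2 hB1.2 hdαβ
  -- y := α is fixed by both h and k
  have hyh : h • α = α := by
    have := hαh
    rwa [inv_smul_eq_iff, eq_comm] at this
  have hyk : k • α = α := hαβ ▸ hβk
  -- every vertex of the path from a to b lies in Fix h ∪ Fix k
  have hsupp : ∀ z ∈ (tpath hT a b).support, z = a ∨ z = b := by
    intro z hz
    have hbyp : ((tpath hT α a).reverse.append (tpath hT α b)).bypass = tpath hT a b :=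
      tpath_unique hT (Walk.bypass_isPath _)
    have hz' : z ∈ ((tpath hT α a).reverse.append (tpath hT α b)).support := by
      rw [← hbyp] at hz
      exact Walk.support_bypass_subset _ hz
    rw [Walk.support_append] at hz'
    rcases List.mem_append.1 hz' with hz' | hz'
    · rw [Walk.support_reverse, List.mem_reverse] at hz'
      exact Or.inl (hFh z hz (fix_convex hT hact hyh hha hz'))
    · have : z ∈ (tpath hT α b).support := List.mem_of_mem_tail hz'
      exact Or.inr (hFk z hz (fix_convex hT hact hyk hkb this))
  have hadj : T.Adj a b :=
    adj_of_support_subset (tpath hT a b) (tpath_isPath hT a b) hsupp hab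
  -- b is not on the path from α to a
  have hbQ : b ∉ (tpath hT α a).support := by
    intro hb
    exact hab (hFh b (Walk.end_mem_support _) (fix_convex hT hact hyh hha hb)).symm
  -- extend the path from α to a by the edge a-b
  have hQ' : ((tpath hT α a).concat hadj).IsPath := by
    rw [Walk.isPath_def, Walk.support_concat]
    rw [← List.concat_eq_append]
    exact List.Nodup.concat hbQ (tpath_isPath hT α a).support_nodup
  have hQ'eq : (tpath hT α a).concat hadj = tpath hT α b := tpath_unique hT hQ'
  have haR : a ∈ (tpath hT α b).support := by
    rw [← hQ'eq, Walk.support_concat]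
    exact List.mem_append_left _ (Walk.end_mem_support _)
  exact hab (hFk a (Walk.start_mem_support _) (fix_convex hT hact hyk hkb haR))

end Action

lemma mem_tpath_of_cons {a b c z : V} (hadj : T.Adj a c) (q : T.Walk c b)
    (hp : Walk.cons hadj q = tpath hT a b) (hz : z ∈ q.support) :
    c ∈ (tpath hT a z).support := by
  have hpp : (Walk.cons hadj q).IsPath := hp ▸ tpath_isPath hT a b
  have hqp : q.IsPath := ((Walk.cons_isPath_iff _ _).1 hpp).1
  have haq : a ∉ q.support := ((Walk.cons_isPath_iff _ _).1 hpp).2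
  have hwp : (Walk.cons hadj (q.takeUntil z hz)).IsPath := by
    rw [Walk.cons_isPath_iff]
    exact ⟨hqp.takeUntil hz, fun h => haq (Walk.support_takeUntil_subset _ hz h)⟩
  have hweq : Walk.cons hadj (q.takeUntil z hz) = tpath hT a z := tpath_unique hT hwp
  rw [← hweq, Walk.support_cons]
  exact List.mem_cons_of_mem _ (Walk.start_mem_support _)

end PurelyElliptic

open PurelyElliptic in
/-- A finitely generated group acting purely elliptically on a tree fixes a vertex. -/
theorem purely_elliptic_on_tree_fixes_vertex {V : Type*} (T : SimpleGraph V)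
    (hT : T.IsTree) {Γ : Type*} [Group Γ] [Group.FG Γ] [MulAction Γ V]
    (hact : ∀ (g : Γ) (u v : V), T.Adj u v ↔ T.Adj (g • u) (g • v))
    (hell : ∀ g : Γ, ∃ v : V, g • v = v) :
    ∃ v : V, ∀ g : Γ, g • v = v := by
  classical
  obtain ⟨S, hS⟩ := Group.fg_def.1 ‹Group.FG Γ›
  -- every finite set of elements has a common fixed vertex
  have main : ∀ s : Finset Γ, ∃ v : V, ∀ g ∈ s, g • v = v := by
    intro s
    induction s using Finset.induction_on with
    | empty =>
      obtain ⟨v⟩ := hT.isConnected.nonempty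
      exact ⟨v, by simp⟩
    | @insert k s hk ih =>
      obtain ⟨v0, hv0⟩ := ih
      by_cases hAB : ∃ v : V, (∀ g ∈ s, g • v = v) ∧ k • v = v
      · obtain ⟨v, hvA, hvk⟩ := hAB
        refine ⟨v, fun g hg => ?_⟩
        rcases Finset.mem_insert.1 hg with rfl | hg
        · exact hvk
        · exact hvA g hg
      · exfalso
        push_neg at hAB
        obtain ⟨b0, hb0⟩ := hell k
        have hP : ∃ n, ∃ a b : V, (∀ g ∈ s, g • a = a) ∧ k • b = b ∧ td hT a b = n :=
          ⟨_, v0, b0, hv0, hb0, rfl⟩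
        obtain ⟨a, b, haA, hbk, hd⟩ := Nat.find_spec hP
        have hab : a ≠ b := by
          rintro rfl
          exact hAB a haA hbk
        -- decompose the path from a to b
        have hdecomp : ∃ c, ∃ hadj : T.Adj a c, ∃ q : T.Walk c b,
            Walk.cons hadj q = tpath hT a b := by
          cases hpe : tpath hT a b with
          | nil => exact absurd rfl hab
          | cons hadj q => exact ⟨_, hadj, q, rfl⟩
        obtain ⟨c, hadj, q, hq⟩ := hdecomp
        have hqp : q.IsPath :=
          ((Walk.cons_isPath_iff _ _).1 (hq ▸ tpath_isPath hT a b)).1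
        have hqlen : q.length + 1 = td hT a b := by
          have := congrArg Walk.length hq
          simpa [Walk.length_cons, td] using this
        -- c is not fixed by all of s
        have hcA : ¬ ∀ g ∈ s, g • c = c := by
          intro hcfix
          have hcb : td hT c b = q.length := by rw [td, ← tpath_unique hT hqp]
          have := Nat.find_min' hP ⟨c, b, hcfix, hbk, hcb⟩
          omega
        push_neg at hcA
        obtain ⟨h, hhs, hhc⟩ := hcA
        have hha : h • a = a := haA h hhs
        -- h fixes no vertex of the path except a
        have hFh : ∀ z ∈ (tpath hT a b).support, h • z = z → z = a := by
          intro z hz hzf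
          by_contra hza
          have hzq : z ∈ q.support := by
            rw [← hq, Walk.support_cons] at hz
            rcases List.mem_cons.1 hz with rfl | hz
            · exact absurd rfl hza
            · exact hz
          exact hhc (fix_convex hT hact hha hzf (mem_tpath_of_cons hT hadj q hq hzq))
        -- k fixes no vertex of the path except b
        have hFk : ∀ z ∈ (tpath hT a b).support, k • z = z → z = b := by
          intro z hz hzf
          by_contra hzb
          have h1 : td hT a z + td hT z b = td hT a b := td_add hT hz
          have h2 : td hT z b ≠ 0 := fun h0 => hzb ((td_eq_zero_iff hT).1 h0)
          have := Nat.find_min' hP ⟨a, z, haA, hzf, rfl⟩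
          omega
        exact key hT hact hha hbk hab hFh hFk hell
  obtain ⟨v, hv⟩ := main S
  refine ⟨v, fun g => ?_⟩
  have hg : g ∈ Subgroup.closure (S : Set Γ) := hS ▸ Subgroup.mem_top g
  refine Subgroup.closure_induction (p := fun g _ => g • v = v)
    (fun x hx => hv x hx) (one_smul Γ v) ?_ ?_ hg
  · intro x y _ _ hxv hyv
    rw [mul_smul, hyv, hxv]
  · intro x _ hxv
    rw [← hxv, inv_smul_smul, hxv]
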